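/- For every odd natural number n ≥ 3, ∑_{l=1}^{n-1} tan²(πl/n) = n(n−1). -/

import Mathlib

open Real Finset

private theorem div_aux_tan (S C z : ℂ) (hC : C ≠ 0) (hz1 : z + 1 ≠ 0)
    (key : S ^ 2 * (z + 1) ^ 2 = C ^ 2 * (4 * z - (z + 1) ^ 2)) :
    (S / C) ^ 2 = z * (2 / (z + 1)) ^ 2 - 1 := by
  field_simp
  linear_combination key

private theorem tan_aux (n : ℕ) (hodd : Odd n) (θ : ℝ) (z : ℂ)
    (hc : Real.cos θ ≠ 0)
    (hz : z = Complex.exp (θ * Complex.I) ^ 2)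
    (hzn : z ^ n = 1) :
    ((Real.tan θ ^ 2 : ℝ) : ℂ) = z * (∑ k ∈ Finset.range n, (-z) ^ k) ^ 2 - 1 := by
  set g : ℂ := ∑ k ∈ Finset.range n, (-z) ^ k with hg
  have h2 : (z + 1) * g = 2 := by
    have := geom_sum_mul (-z) n
    rw [← hg] at this
    have hzn' : (-z) ^ n = -1 := by rw [hodd.neg_pow, hzn]
    rw [hzn'] at this
    linear_combination -this
  have hz1 : z + 1 ≠ 0 := by
    intro h; rw [h, zero_mul] at h2; norm_num at h2
  set c : ℝ := Real.cos θ
  set s : ℝ := Real.sin θ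
  have pyth0 : s ^ 2 + c ^ 2 = 1 := Real.sin_sq_add_cos_sq θ
  have pyth : (s : ℂ) ^ 2 + (c : ℂ) ^ 2 = 1 := by
    exact_mod_cast congrArg (Complex.ofReal) pyth0
  have he : Complex.exp (θ * Complex.I) = (c : ℂ) + (s : ℂ) * Complex.I := by
    rw [Complex.exp_mul_I]; simp [c, s]
  have hcC : (c : ℂ) ≠ 0 := Complex.ofReal_ne_zero.mpr hc
  have h3 : ((c : ℂ) + (s : ℂ) * Complex.I) ^ 2 + 1
      = 2 * (c : ℂ) * ((c : ℂ) + (s : ℂ) * Complex.I) := by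
    linear_combination (s : ℂ) ^ 2 * Complex.I_sq - pyth
  have h5 : (z + 1) ^ 2 = 4 * (c : ℂ) ^ 2 * z := by
    rw [hz, he, h3]; ring
  have hgval : g = 2 / (z + 1) := by
    field_simp; linear_combination h2
  have key : (s : ℂ) ^ 2 * (z + 1) ^ 2 = (c : ℂ) ^ 2 * (4 * z - (z + 1) ^ 2) := by
    linear_combination ((s : ℂ) ^ 2 + (c : ℂ) ^ 2) * h5 + 4 * (c : ℂ) ^ 2 * z * pyth
  rw [Real.tan_eq_sin_div_cos, hgval]
  rw [Complex.ofReal_pow, Complex.ofReal_div]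
  exact div_aux_tan _ _ _ hcC hz1 key

private theorem cos_ne_zero_aux (n l : ℕ) (hodd : Odd n) (hn0 : n ≠ 0) :
    Real.cos (π * l / n) ≠ 0 := by
  intro hc
  rw [Real.cos_eq_zero_iff] at hc
  obtain ⟨k, hk⟩ := hc
  have hnR : (n : ℝ) ≠ 0 := Nat.cast_ne_zero.mpr hn0
  have hk' : π * ↑l * 2 = (2 * ↑k + 1) * π * ↑n := by field_simp at hk; linear_combination π * hk
  have : (2 * l : ℝ) = n * (2 * k + 1) := by
    apply mul_left_cancel₀ Real.pi_ne_zero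
    linear_combination hk'
  have h2 : (2 * l : ℤ) = n * (2 * k + 1) := by exact_mod_cast this
  have : Odd ((n : ℤ) * (2 * k + 1)) :=
    (Int.odd_coe_nat n |>.mpr hodd).mul (odd_two_mul_add_one k)
  rw [← h2] at this
  exact (Int.not_odd_iff_even.mpr ⟨l, by ring⟩) this

theorem tan_sq_sum (n : ℕ) (hn : 3 ≤ n) (hodd : Odd n) :
    ∑ l ∈ Finset.Ico 1 n, Real.tan (π * l / n) ^ 2 = (n : ℝ) * (n - 1) := by
  have hn0 : n ≠ 0 := by omega
  set ζ : ℂ := Complex.exp (2 * π * Complex.I / n) with hζdef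
  have hprim : IsPrimitiveRoot ζ n := Complex.isPrimitiveRoot_exp n hn0
  have hζn : ζ ^ n = 1 := hprim.pow_eq_one
  -- orthogonality
  have horth : ∀ m : ℕ, ∑ l ∈ Finset.range n, (ζ ^ m) ^ l
      = if n ∣ m then (n : ℂ) else 0 := by
    intro m
    by_cases h : n ∣ m
    · rw [if_pos h, (hprim.pow_eq_one_iff_dvd m).mpr h]
      simp
    · rw [if_neg h]
      have hne : ζ ^ m ≠ 1 := fun hc => h ((hprim.pow_eq_one_iff_dvd m).mp hc)
      rw [geom_sum_eq hne, ← pow_mul, mul_comm m n, pow_mul, hζn, one_pow,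
        sub_self, zero_div]
  -- per-term identity
  have hkey : ∀ l : ℕ, ((Real.tan (π * l / n) ^ 2 : ℝ) : ℂ)
      = ζ ^ l * (∑ k ∈ Finset.range n, (-ζ ^ l) ^ k) ^ 2 - 1 := by
    intro l
    apply tan_aux n hodd _ _ (cos_ne_zero_aux n l hodd hn0)
    · rw [hζdef, ← Complex.exp_nat_mul, sq, ← Complex.exp_add]
      congr 1
      push_cast
      have hnC : (n : ℂ) ≠ 0 := Nat.cast_ne_zero.mpr hn0
      field_simp
      ring
    · rw [← pow_mul, mul_comm, pow_mul, hζn, one_pow]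
  -- the big complex computation
  have hbig : ∑ l ∈ Finset.range n, ζ ^ l * (∑ k ∈ Finset.range n, (-ζ ^ l) ^ k) ^ 2
      = (n : ℂ) * n := by
    have step1 : ∀ l, ζ ^ l * (∑ k ∈ Finset.range n, (-ζ ^ l) ^ k) ^ 2
        = ∑ j ∈ Finset.range n, ∑ k ∈ Finset.range n,
            (-1 : ℂ) ^ j * (-1 : ℂ) ^ k * (ζ ^ (j + k + 1)) ^ l := by
      intro l
      rw [sq, Finset.sum_mul_sum, Finset.mul_sum]
      refine Finset.sum_congr rfl fun j _ => ?_
      rw [Finset.mul_sum]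
      refine Finset.sum_congr rfl fun k _ => ?_
      rw [neg_pow, neg_pow]; ring
    calc ∑ l ∈ Finset.range n, ζ ^ l * (∑ k ∈ Finset.range n, (-ζ ^ l) ^ k) ^ 2
        = ∑ l ∈ Finset.range n, ∑ j ∈ Finset.range n, ∑ k ∈ Finset.range n,
            (-1 : ℂ) ^ j * (-1 : ℂ) ^ k * (ζ ^ (j + k + 1)) ^ l := by
          exact Finset.sum_congr rfl fun l _ => step1 l
      _ = ∑ j ∈ Finset.range n, ∑ k ∈ Finset.range n,
            (-1 : ℂ) ^ j * (-1 : ℂ) ^ k * ∑ l ∈ Finset.range n, (ζ ^ (j + k + 1)) ^ l := by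
          rw [Finset.sum_comm]
          refine Finset.sum_congr rfl fun j _ => ?_
          rw [Finset.sum_comm]
          refine Finset.sum_congr rfl fun k _ => ?_
          rw [Finset.mul_sum]
      _ = ∑ j ∈ Finset.range n, (n : ℂ) := by
          refine Finset.sum_congr rfl fun j hj => ?_
          have hjn : j < n := Finset.mem_range.mp hj
          rw [Finset.sum_eq_single (n - 1 - j)]
          · rw [horth, if_pos (show n ∣ j + (n - 1 - j) + 1 by
                rw [show j + (n - 1 - j) + 1 = n by omega]), ← pow_add]
            have hexp : j + (n - 1 - j) = n - 1 := by omega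
            rw [hexp, (Nat.Odd.sub_odd hodd odd_one).neg_one_pow, one_mul]
          · intro k hk hkne
            have hkn : k < n := Finset.mem_range.mp hk
            have hndvd : ¬ n ∣ j + k + 1 := by
              rintro ⟨m, hm⟩
              have hm0 : m ≠ 0 := by rintro rfl; omega
              have h1 : n * m < n * 2 := by omega
              have hmlt : m < 2 := lt_of_mul_lt_mul_left h1 (Nat.zero_le n)
              have hm1 : m = 1 := by omega
              rw [hm1, mul_one] at hm
              omega
            rw [horth, if_neg hndvd, mul_zero]
          · intro h
            exact absurd (Finset.mem_range.mpr (by omega)) h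
      _ = (n : ℂ) * n := by
          rw [Finset.sum_const, Finset.card_range, nsmul_eq_mul]
  -- put it together
  apply Complex.ofReal_injective
  have hsplit : ∑ l ∈ Finset.range n, Real.tan (π * l / n) ^ 2
      = ∑ l ∈ Finset.Ico 1 n, Real.tan (π * l / n) ^ 2 := by
    rw [Finset.range_eq_Ico, Finset.sum_eq_sum_Ico_succ_bot (by omega : 0 < n)]
    norm_num
  rw [← hsplit, Complex.ofReal_sum]
  rw [Finset.sum_congr rfl fun l _ => hkey l]
  rw [Finset.sum_sub_distrib, hbig, Finset.sum_const, Finset.card_range,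
    nsmul_eq_mul, mul_one]
  push_cast
  ring
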